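/- Let F and G be graphs whose source maps agree and whose target maps agree on the common edge set F¹ ∩ G¹. It is not true in general that admissibility of both inclusions F ↪ F ∪ G and G ↪ F ∪ G implies admissibility of both inclusions F ∩ G ↪ F and F ∩ G ↪ G: there exist graphs F and G (F having vertices w₁, v and countably infinitely many edges from v to w₁; G having vertices v, w₂ and a single edge from v to w₂) for which both inclusions into F ∪ G are admissible, but the inclusion F ∩ G ↪ G is not admissible. -/

import Mathlib

/-- A graph carved out of ambient vertex/edge types `V` and `E`: a set of vertices,
a set of edges, and source/target maps sending the edges into the vertices. -/
structure SetGraph (V E : Type) where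
  verts : Set V
  edges : Set E
  s : E → V
  t : E → V
  s_mem : ∀ e ∈ edges, s e ∈ verts
  t_mem : ∀ e ∈ edges, t e ∈ verts

namespace SetGraph

variable {V E : Type}

/-- `A` is a subgraph of `B`: vertices and edges are included and the source and
target maps of `A` are the restrictions of those of `B`. -/
def IsSubgraph (A B : SetGraph V E) : Prop :=
  A.verts ⊆ B.verts ∧ A.edges ⊆ B.edges ∧
    ∀ e ∈ A.edges, A.s e = B.s e ∧ A.t e = B.t e

/-- A subset `H` of the vertices of `B` is hereditary iff every edge of `B` whose
source lies in `H` has its target in `H`. -/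
def Hereditary (B : SetGraph V E) (H : Set V) : Prop :=
  ∀ e ∈ B.edges, B.s e ∈ H → B.t e ∈ H

/-- A subset `H` of the vertices of `B` is saturated iff no vertex outside `H` emits
a nonempty finite set of edges all of whose targets lie in `H`. -/
def Saturated (B : SetGraph V E) (H : Set V) : Prop :=
  ¬ ∃ v ∈ B.verts \ H,
      ({e ∈ B.edges | B.s e = v}).Nonempty ∧
      ({e ∈ B.edges | B.s e = v}).Finite ∧
      ∀ e ∈ B.edges, B.s e = v → B.t e ∈ H

/-- The inclusion of a subgraph `A ⊆ B` is admissible iff `B.verts \ A.verts` is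
hereditary and saturated in `B`, and the edges of `A` are exactly the edges of `B`
whose target lies in `A.verts`. -/
def Admissible (A B : SetGraph V E) : Prop :=
  IsSubgraph A B ∧
  Hereditary B (B.verts \ A.verts) ∧
  Saturated B (B.verts \ A.verts) ∧
  A.edges = {e ∈ B.edges | B.t e ∈ A.verts}

/-- The intersection graph of two graphs whose source and target maps agree on the
common edges. -/
def inter (F G : SetGraph V E)
    (hs : ∀ e ∈ F.edges ∩ G.edges, F.s e = G.s e)
    (ht : ∀ e ∈ F.edges ∩ G.edges, F.t e = G.t e) : SetGraph V E where
  verts := F.verts ∩ G.verts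
  edges := F.edges ∩ G.edges
  s := F.s
  t := F.t
  s_mem := fun e he => ⟨F.s_mem e he.1, by rw [hs e he]; exact G.s_mem e he.2⟩
  t_mem := fun e he => ⟨F.t_mem e he.1, by rw [ht e he]; exact G.t_mem e he.2⟩

open Classical in
/-- The union graph of two graphs whose source and target maps agree on the
common edges. -/
noncomputable def union (F G : SetGraph V E) : SetGraph V E where
  verts := F.verts ∪ G.verts
  edges := F.edges ∪ G.edges
  s := fun e => if e ∈ F.edges then F.s e else G.s e
  t := fun e => if e ∈ F.edges then F.t e else G.t e
  s_mem := by
    intro e he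
    by_cases h : e ∈ F.edges
    · simpa [h] using Or.inl (F.s_mem e h)
    · simpa [h] using Or.inr (G.s_mem e (he.resolve_left h))
  t_mem := by
    intro e he
    by_cases h : e ∈ F.edges
    · simpa [h] using Or.inl (F.t_mem e h)
    · simpa [h] using Or.inr (G.t_mem e (he.resolve_left h))

end SetGraph


noncomputable section Stmt16Aux

def Fgraph : SetGraph ℕ ℕ where
  verts := {1, 0}
  edges := {n | 0 < n}
  s := fun _ => 0
  t := fun _ => 1
  s_mem := fun _ _ => by simp
  t_mem := fun _ _ => by simp

def Ggraph : SetGraph ℕ ℕ where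
  verts := {0, 2}
  edges := {0}
  s := fun _ => 0
  t := fun _ => 2
  s_mem := fun _ _ => by simp
  t_mem := fun _ _ => by simp

end Stmt16Aux

/-- admissibility of both F ↪ F ∪ G and G ↪ F ∪ G does not imply
admissibility of the intersection: there are graphs F (vertices w₁, v; countably
infinitely many edges from v to w₁) and G (vertices v, w₂; one edge from v to w₂)
with both inclusions into F ∪ G admissible, while F ∩ G ↪ G is not admissible. -/
theorem stmt_16 :
    ∃ (V E : Type) (F G : SetGraph V E)
      (hs : ∀ e ∈ F.edges ∩ G.edges, F.s e = G.s e)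
      (ht : ∀ e ∈ F.edges ∩ G.edges, F.t e = G.t e),
      (∃ v w₁ w₂ : V, w₁ ≠ v ∧ w₂ ≠ v ∧ w₁ ≠ w₂ ∧
        F.verts = {w₁, v} ∧ G.verts = {v, w₂} ∧
        F.edges.Infinite ∧ F.edges.Countable ∧
        (∀ e ∈ F.edges, F.s e = v ∧ F.t e = w₁) ∧
        (∃ e₀ : E, G.edges = {e₀} ∧ G.s e₀ = v ∧ G.t e₀ = w₂)) ∧
      SetGraph.Admissible F (SetGraph.union F G) ∧
      SetGraph.Admissible G (SetGraph.union F G) ∧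
      ¬ SetGraph.Admissible (SetGraph.inter F G hs ht) G := by
  refine ⟨ℕ, ℕ, Fgraph, Ggraph, fun e _ => rfl, fun e he => ?_, ?_, ?_, ?_, ?_⟩
  · exact absurd he.2 (by simp [Ggraph, Fgraph] at he ⊢)
  · refine ⟨0, 1, 2, by simp, by simp, by simp, rfl, rfl, ?_, Set.to_countable _,
      fun e _ => ⟨rfl, rfl⟩, 0, rfl, rfl, rfl⟩
    · have : Fgraph.edges = Set.Ioi 0 := rfl
      rw [this]; exact Set.Ioi_infinite 0
  · -- Admissible F (union F G)
    refine ⟨⟨by intro x hx; exact Or.inl hx, by intro x hx; exact Or.inl hx, ?_⟩, ?_, ?_, ?_⟩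
    · intro e he
      have h1 : e ∈ Fgraph.edges := he
      constructor <;> simp [SetGraph.union, h1]
    · intro e he hse
      exact absurd hse.2 (by
        simp only [SetGraph.union, Fgraph, Ggraph] at he ⊢
        by_cases h : 0 < e <;> simp [h, Set.mem_setOf_eq])
    · rintro ⟨x, hx, ⟨e, he, hse⟩, _, htar⟩
      have hx0 : x = 0 := by
        have := hse
        simp only [SetGraph.union] at this
        rw [← this]; split <;> rfl
      have h1 : (1:ℕ) ∈ (Fgraph.union Ggraph).edges := Or.inl (by norm_num [Fgraph])
      have := htar 1 h1 (by simp [SetGraph.union, Fgraph, hx0])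
      exact this.2 (by simp [SetGraph.union, Fgraph])
    · ext e
      simp only [SetGraph.union, Set.mem_setOf_eq, Fgraph, Ggraph, Set.mem_union,
        Set.mem_singleton_iff, Set.mem_insert_iff]
      by_cases h : 0 < e <;> simp [h, Set.mem_setOf_eq] <;> omega
  · -- Admissible G (union F G)
    refine ⟨⟨by intro x hx; exact Or.inr hx, by intro x hx; exact Or.inr hx, ?_⟩, ?_, ?_, ?_⟩
    · intro e he
      have h0 : e = 0 := he
      subst h0
      have hatF : (0:ℕ) ∉ Fgraph.edges := by simp [Fgraph]
      constructor <;> simp [SetGraph.union, hatF, Ggraph] <;> simp [hatF]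
    · intro e he hse
      have hs0 : (Fgraph.union Ggraph).s e = 0 := by
        simp only [SetGraph.union]
        split <;> rfl
      rw [hs0] at hse
      exact absurd hse.2 (by simp [Ggraph])
    · rintro ⟨x, hx, ⟨e, he, hse⟩, _, htar⟩
      have hx0 : x = 0 := by
        have := hse
        simp only [SetGraph.union] at this
        rw [← this]; split <;> rfl
      have h1 : (0:ℕ) ∈ (Fgraph.union Ggraph).edges := Or.inr rfl
      have h0F : (0:ℕ) ∉ Fgraph.edges := by simp [Fgraph]
      have := htar 0 h1 (by simp [SetGraph.union, h0F, Ggraph, hx0])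
      exact this.2 (by simp [SetGraph.union, h0F, Ggraph])
    · ext e
      simp only [SetGraph.union, Set.mem_setOf_eq, Fgraph, Ggraph, Set.mem_union,
        Set.mem_singleton_iff, Set.mem_insert_iff]
      by_cases h : 0 < e <;> simp [h, Set.mem_setOf_eq] <;> omega
  · -- not admissible inter
    rintro ⟨_, _, hsat, _⟩
    apply hsat
    refine ⟨0, ⟨Or.inl rfl, ?_⟩, ⟨0, rfl, rfl⟩, ?_, ?_⟩
    · simp [SetGraph.inter, Fgraph, Ggraph]
    · exact Set.Finite.subset (Set.finite_singleton 0) (fun e he => he.1)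
    · intro e he _
      have h0 : e = 0 := he
      subst h0
      refine ⟨Or.inr rfl, ?_⟩
      simp [SetGraph.inter, Fgraph, Ggraph]
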